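/- Let d ≥ 2, c = (c₁,…,c_d) ∈ ℕ^d with c_j > 1 for all j, and let J ⊆ [d] be nonempty. For every subset A ⊆ Ω_J(c), the set S = A ∪ O(c) is a GNS in ℕ₀^d with corner c. -/
import Mathlib


open scoped BigOperators

/-- A generalized numerical semigroup (GNS): a submonoid of ℕ₀^d with finite complement. -/
def IsGNS {d : ℕ} (S : Set (Fin d → ℕ)) : Prop :=
  0 ∈ S ∧ (∀ x ∈ S, ∀ y ∈ S, x + y ∈ S) ∧ Sᶜ.Finite

/-- `c` is a corner of `S`: (1) any tuple whose i-th coordinate is ≥ c i lies in S;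
(2) for each i with c i ≥ 1 there is a tuple with i-th coordinate c i − 1 outside S. -/
def IsCornerOf {d : ℕ} (S : Set (Fin d → ℕ)) (c : Fin d → ℕ) : Prop :=
  c ∈ S ∧
  (∀ i : Fin d, ∀ x : Fin d → ℕ, c i ≤ x i → x ∈ S) ∧
  (∀ i : Fin d, c i = 0 ∨ ∃ x : Fin d → ℕ, x i + 1 = c i ∧ x ∉ S)

theorem union_Omega_ordinary_is_GNS {d : ℕ} (hd : 2 ≤ d) (c : Fin d → ℕ)
    (hc : ∀ i, 1 < c i) (J : Finset (Fin d)) (hJ : J.Nonempty)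
    (A : Set (Fin d → ℕ))
    (hA : A ⊆ {x : Fin d → ℕ |
        (∀ j ∈ J, (c j + 1) / 2 ≤ x j ∧ x j + 1 ≤ c j) ∧
        ∀ i ∉ J, x i < (c i + 1) / 2}) :
    IsGNS (A ∪ ({0} ∪ {y : Fin d → ℕ | ∀ i, y i + 1 ≤ c i}ᶜ)) ∧
      IsCornerOf (A ∪ ({0} ∪ {y : Fin d → ℕ | ∀ i, y i + 1 ≤ c i}ᶜ)) c := by
  have hnt : Nontrivial (Fin d) := by
    rw [Fin.nontrivial_iff_two_le]; exact hd
  -- helper: if x escapes the box, x + y does too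
  have hBc : ∀ x y : Fin d → ℕ, (¬ ∀ i, x i + 1 ≤ c i) →
      x + y ∈ A ∪ ({0} ∪ {y : Fin d → ℕ | ∀ i, y i + 1 ≤ c i}ᶜ) := by
    intro x y h
    right; right
    intro h'
    apply h
    intro i
    have := h' i
    simp only [Pi.add_apply] at this
    omega
  obtain ⟨j0, hj0⟩ := hJ
  constructor
  · refine ⟨Or.inr (Or.inl rfl), ?_, ?_⟩
    · rintro x (hx | rfl | hx) y (hy | rfl | hy)
      · -- both in A
        right; right
        intro h
        have hx' := (hA hx).1 j0 hj0
        have hy' := (hA hy).1 j0 hj0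
        have := h j0
        simp only [Pi.add_apply] at this
        omega
      · rw [add_zero]; exact Or.inl hx
      · rw [add_comm]; exact hBc y x hy
      · rw [zero_add]; exact Or.inl hy
      · exact Or.inr (Or.inl (by simp))
      · rw [zero_add]; exact Or.inr (Or.inr hy)
      · exact hBc x y hx
      · rw [add_zero]; exact Or.inr (Or.inr hx)
      · exact hBc x y hx
    · apply Set.Finite.subset (Set.Finite.pi (fun i => Set.finite_Iio (c i)))
      intro z hz
      simp only [Set.mem_compl_iff, Set.mem_union, Set.mem_setOf_eq, not_or, not_not] at hz
      intro i _
      have := hz.2.2 i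
      simp only [Set.mem_Iio]
      omega
  · refine ⟨?_, ?_, ?_⟩
    · right; right
      intro h
      exact absurd (h j0) (by omega)
    · intro i x hcx
      right; right
      intro h
      have := h i
      omega
    · intro i
      right
      refine ⟨fun k => if k = i then c i - 1 else if k ∈ J then 0 else c k - 1, ?_, ?_⟩
      · simp only [eq_self_iff_true, if_true]
        have := hc i; omega
      · rintro (hx | hx | hx)
        · obtain ⟨h1, h2⟩ := hA hx
          by_cases hiJ : i ∈ J
          · by_cases hk : ∃ k ∈ J, k ≠ i
            · obtain ⟨k, hkJ, hki⟩ := hk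
              have := (h1 k hkJ).1
              simp only [if_neg hki, if_pos hkJ] at this
              have := hc k; omega
            · push_neg at hk
              obtain ⟨k, hki⟩ := exists_ne i
              have hkJ : k ∉ J := fun h => hki (hk k h)
              have := h2 k hkJ
              simp only [if_neg hki, if_neg hkJ] at this
              have := hc k; omega
          · have := h2 i hiJ
            simp only [eq_self_iff_true, if_true] at this
            have := hc i; omega
        · have := congrFun hx i
          simp only [eq_self_iff_true, if_true, Pi.zero_apply] at this
          have := hc i; omega
        · apply hx
          intro k
          by_cases hki : k = i
          · subst hki; simp only [eq_self_iff_true, if_true]; have := hc k; omega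
          · by_cases hkJ : k ∈ J
            · simp only [if_neg hki, if_pos hkJ]; have := hc k; omega
            · simp only [if_neg hki, if_neg hkJ]; have := hc k; omega
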